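/- The function D on ℝ² satisfies a quasi-triangle inequality: there exists a constant M ≥ 1 such that D(p,r) ≤ M(D(p,q) + D(q,r)) for all p, q, r ∈ ℝ². -/

import Mathlib

noncomputable def D (p q : ℝ × ℝ) : ℝ :=
  max |q.2 - p.2| (abs ((q.1 - p.1) - (q.2 - p.2) * Real.log |q.2 - p.2|))

lemma key_pos (x y : ℝ) (hx : 0 ≤ x) (hy : 0 ≤ y) :
    |(x + y) * Real.log (x + y) - x * Real.log x - y * Real.log y| ≤ x + y := by
  rcases eq_or_lt_of_le hx with h | hx'
  · simp [← h]
    positivity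
  rcases eq_or_lt_of_le hy with h | hy'
  · simp [← h]
    positivity
  have hxy : 0 < x + y := by linarith
  have e : (x + y) * Real.log (x + y) - x * Real.log x - y * Real.log y
      = x * (Real.log (x + y) - Real.log x) + y * (Real.log (x + y) - Real.log y) := by ring
  have h1 : 0 ≤ Real.log (x + y) - Real.log x := by
    have : Real.log x ≤ Real.log (x + y) := Real.log_le_log hx' (by linarith)
    linarith
  have h2 : 0 ≤ Real.log (x + y) - Real.log y := by
    have : Real.log y ≤ Real.log (x + y) := Real.log_le_log hy' (by linarith)
    linarith
  have h3 : x * (Real.log (x + y) - Real.log x) ≤ y := by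
    have hd : Real.log (x + y) - Real.log x = Real.log ((x + y) / x) :=
      (Real.log_div (ne_of_gt hxy) (ne_of_gt hx')).symm
    have hb : Real.log ((x + y) / x) ≤ (x + y) / x - 1 :=
      Real.log_le_sub_one_of_pos (div_pos hxy hx')
    have : x * Real.log ((x + y) / x) ≤ x * ((x + y) / x - 1) :=
      mul_le_mul_of_nonneg_left hb hx
    have hx0 : x ≠ 0 := ne_of_gt hx'
    rw [hd]
    calc x * Real.log ((x + y) / x) ≤ x * ((x + y) / x - 1) := this
      _ = y := by field_simp; ring
  have h4 : y * (Real.log (x + y) - Real.log y) ≤ x := by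
    have hd : Real.log (x + y) - Real.log y = Real.log ((x + y) / y) :=
      (Real.log_div (ne_of_gt hxy) (ne_of_gt hy')).symm
    have hb : Real.log ((x + y) / y) ≤ (x + y) / y - 1 :=
      Real.log_le_sub_one_of_pos (div_pos hxy hy')
    have : y * Real.log ((x + y) / y) ≤ y * ((x + y) / y - 1) :=
      mul_le_mul_of_nonneg_left hb hy
    have hy0 : y ≠ 0 := ne_of_gt hy'
    rw [hd]
    calc y * Real.log ((x + y) / y) ≤ y * ((x + y) / y - 1) := this
      _ = x := by field_simp; ring
  rw [e, abs_of_nonneg (by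
    have := mul_nonneg hx h1
    have := mul_nonneg hy h2
    linarith)]
  linarith

lemma key_mixed (a b : ℝ) (ha : 0 ≤ a) (hb : b ≤ 0) :
    |(a + b) * Real.log (a + b) - a * Real.log a - b * Real.log b| ≤ |a| + |b| := by
  rcases le_or_gt 0 (a + b) with h | h
  · have hk := key_pos (a + b) (-b) h (neg_nonneg.2 hb)
    have e : (a + b) * Real.log (a + b) - a * Real.log a - b * Real.log b
        = -((a + b + -b) * Real.log (a + b + -b) - (a + b) * Real.log (a + b)
            - (-b) * Real.log (-b)) := by
      rw [Real.log_neg_eq_log, show a + b + -b = a from by ring]; ring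
    rw [e, abs_neg]
    have : a ≤ |a| + |b| := by
      have := abs_of_nonneg ha
      have := abs_nonneg b
      linarith
    linarith
  · have hk := key_pos a (-(a + b)) ha (by linarith)
    have e : (a + b) * Real.log (a + b) - a * Real.log a - b * Real.log b
        = (a + -(a + b)) * Real.log (a + -(a + b)) - a * Real.log a
            - (-(a + b)) * Real.log (-(a + b)) := by
      rw [Real.log_neg_eq_log, show a + -(a + b) = -b from by ring, Real.log_neg_eq_log]; ring
    rw [e]
    have : a + -(a + b) ≤ |a| + |b| := by
      have h1 := abs_of_nonpos hb
      have h2 := abs_nonneg a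
      linarith
    linarith

lemma key (a b : ℝ) :
    |(a + b) * Real.log (a + b) - a * Real.log a - b * Real.log b| ≤ |a| + |b| := by
  rcases le_or_gt 0 a with ha | ha
  · rcases le_or_gt 0 b with hb | hb
    · have := key_pos a b ha hb
      rw [abs_of_nonneg ha, abs_of_nonneg hb]
      linarith
    · exact key_mixed a b ha hb.le
  · rcases le_or_gt 0 b with hb | hb
    · have hk := key_mixed b a hb ha.le
      have e : (a + b) * Real.log (a + b) - a * Real.log a - b * Real.log b
          = (b + a) * Real.log (b + a) - b * Real.log b - a * Real.log a := by
        rw [add_comm a b]; ring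
      rw [e]; linarith
    · have hk := key_pos (-a) (-b) (by linarith) (by linarith)
      have e : (a + b) * Real.log (a + b) - a * Real.log a - b * Real.log b
          = -((-a + -b) * Real.log (-a + -b) - (-a) * Real.log (-a)
              - (-b) * Real.log (-b)) := by
        rw [show -a + -b = -(a + b) from by ring, Real.log_neg_eq_log, Real.log_neg_eq_log,
          Real.log_neg_eq_log]
        ring
      rw [e, abs_neg, abs_of_neg ha, abs_of_neg hb]
      linarith

theorem stmt_1 :
    ∃ M : ℝ, 1 ≤ M ∧ ∀ p q r : ℝ × ℝ, D p r ≤ M * (D p q + D q r) := by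
  refine ⟨2, by norm_num, fun p q r => ?_⟩
  set a := q.2 - p.2 with ha
  set b := r.2 - q.2 with hb
  set u := q.1 - p.1 with hu
  set v := r.1 - q.1 with hv
  have h1 : |a| ≤ D p q := le_max_left _ _
  have h2 : |u - a * Real.log a| ≤ D p q := by
    have := le_max_right |q.2 - p.2|
      (abs ((q.1 - p.1) - (q.2 - p.2) * Real.log |q.2 - p.2|))
    simpa [D, Real.log_abs, ← ha, ← hu] using this
  have h3 : |b| ≤ D q r := le_max_left _ _
  have h4 : |v - b * Real.log b| ≤ D q r := by
    have := le_max_right |r.2 - q.2|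
      (abs ((r.1 - q.1) - (r.2 - q.2) * Real.log |r.2 - q.2|))
    simpa [D, Real.log_abs, ← hb, ← hv] using this
  have hk := key a b
  have hDpr : D p r = max |a + b| |(u + v) - (a + b) * Real.log (a + b)| := by
    simp only [D, Real.log_abs]
    rw [show r.2 - p.2 = a + b from by rw [ha, hb]; ring,
      show r.1 - p.1 = u + v from by rw [hu, hv]; ring]
  rw [hDpr, max_le_iff]
  constructor
  · have := abs_add_le a b
    linarith [abs_nonneg a, abs_nonneg b]
  · have e : (u + v) - (a + b) * Real.log (a + b)
        = (u - a * Real.log a) + (v - b * Real.log b)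
          - ((a + b) * Real.log (a + b) - a * Real.log a - b * Real.log b) := by ring
    rw [e]
    have t1 := abs_sub ((u - a * Real.log a) + (v - b * Real.log b))
      ((a + b) * Real.log (a + b) - a * Real.log a - b * Real.log b)
    have t2 := abs_add_le (u - a * Real.log a) (v - b * Real.log b)
    linarith
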